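/- The Banach space ℓ¹ does not have the L-Dunford-Pettis property. -/

import Mathlib

open Filter Topology Metric

noncomputable section

instance : Fact ((1:ENNReal) ≤ ⊤) := ⟨le_top⟩

/-- A sequence is weakly null if every continuous linear functional sends it to a null
sequence. -/
def WeaklyNull {X : Type*} [NormedAddCommGroup X] [NormedSpace ℝ X] (x : ℕ → X) : Prop :=
  ∀ f : X →L[ℝ] ℝ, Tendsto (fun n => f (x n)) atTop (𝓝 0)

/-- A sequence of functionals is weak*-null if it tends to zero pointwise. -/
def WeakStarNull {X : Type*} [NormedAddCommGroup X] [NormedSpace ℝ X]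
    (f : ℕ → X →L[ℝ] ℝ) : Prop :=
  ∀ x : X, Tendsto (fun n => f n x) atTop (𝓝 0)

/-- A norm bounded set is a Dunford-Pettis set if every weakly null sequence of functionals
converges to zero uniformly on it. -/
def IsDPSet {X : Type*} [NormedAddCommGroup X] [NormedSpace ℝ X] (A : Set X) : Prop :=
  Bornology.IsBounded A ∧
  ∀ f : ℕ → X →L[ℝ] ℝ, WeaklyNull f →
    Tendsto (fun n => ⨆ x : A, |f n (x : X)|) atTop (𝓝 0)

/-- A norm bounded subset of the dual is an L-set if every weakly null sequence in `X`
converges to zero uniformly on it. -/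
def IsLSet {X : Type*} [NormedAddCommGroup X] [NormedSpace ℝ X]
    (A : Set (X →L[ℝ] ℝ)) : Prop :=
  Bornology.IsBounded A ∧
  ∀ x : ℕ → X, WeaklyNull x →
    Tendsto (fun n => ⨆ f : A, |(f : X →L[ℝ] ℝ) (x n)|) atTop (𝓝 0)

/-- A norm bounded subset of the dual is an L-Dunford-Pettis set if every weakly null
sequence in `X` which is a Dunford-Pettis set converges to zero uniformly on it. -/
def IsLDPSet {X : Type*} [NormedAddCommGroup X] [NormedSpace ℝ X]
    (A : Set (X →L[ℝ] ℝ)) : Prop :=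
  Bornology.IsBounded A ∧
  ∀ x : ℕ → X, WeaklyNull x → IsDPSet (Set.range x) →
    Tendsto (fun n => ⨆ f : A, |(f : X →L[ℝ] ℝ) (x n)|) atTop (𝓝 0)

/-- A set is relatively weakly compact if its closure in the weak topology is compact. -/
def RelWeaklyCompact {X : Type*} [NormedAddCommGroup X] [NormedSpace ℝ X]
    (A : Set X) : Prop :=
  IsCompact (closure ((toWeakSpace ℝ X) '' A))

/-- The relatively compact Dunford-Pettis property: every Dunford-Pettis set is
relatively norm compact. -/
def HasDPrcP (X : Type*) [NormedAddCommGroup X] [NormedSpace ℝ X] : Prop :=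
  ∀ A : Set X, IsDPSet A → IsCompact (closure A)

/-- An operator is Dunford-Pettis completely continuous if it maps weakly null sequences
that are Dunford-Pettis sets to norm null sequences. -/
def IsDPcc {X Y : Type*} [NormedAddCommGroup X] [NormedSpace ℝ X]
    [NormedAddCommGroup Y] [NormedSpace ℝ Y] (T : X →L[ℝ] Y) : Prop :=
  ∀ x : ℕ → X, WeaklyNull x → IsDPSet (Set.range x) →
    Tendsto (fun n => ‖T (x n)‖) atTop (𝓝 0)

/-- An operator is weakly compact if the image of the closed unit ball is relatively
weakly compact. -/
def IsWeaklyCompactOp {X Y : Type*} [NormedAddCommGroup X] [NormedSpace ℝ X]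
    [NormedAddCommGroup Y] [NormedSpace ℝ Y] (T : X →L[ℝ] Y) : Prop :=
  RelWeaklyCompact (T '' closedBall 0 1)

/-- The L-Dunford-Pettis property: every L-Dunford-Pettis set in the dual is relatively
weakly compact. -/
def HasLDPProperty (X : Type*) [NormedAddCommGroup X] [NormedSpace ℝ X] : Prop :=
  ∀ A : Set (X →L[ℝ] ℝ), IsLDPSet A → RelWeaklyCompact A

/-- The Dunford-Pettis property: every relatively weakly compact set is a
Dunford-Pettis set. -/
def HasDPProperty (X : Type*) [NormedAddCommGroup X] [NormedSpace ℝ X] : Prop :=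
  ∀ A : Set X, RelWeaklyCompact A → IsDPSet A

/-- Grothendieck space: every weak*-null sequence in the dual is weakly null. -/
def IsGrothendieck (X : Type*) [NormedAddCommGroup X] [NormedSpace ℝ X] : Prop :=
  ∀ f : ℕ → X →L[ℝ] ℝ, WeakStarNull f → WeaklyNull f

/-- The space `ℓ∞` of bounded real sequences. -/
abbrev ellInfty : Type := lp (fun _ : ℕ => ℝ) ⊤

namespace Stmt15

abbrev X : Type := lp (fun _ : ℕ => ℝ) 1

lemma hasSum_abs (y : X) : HasSum (fun i => |y i|) ‖y‖ := by
  have h := lp.hasSum_norm (p := 1) (by norm_num) y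
  simpa [Real.rpow_one] using h

lemma sum_abs_le (y : X) (s : Finset ℕ) : ∑ i ∈ s, |y i| ≤ ‖y‖ :=
  sum_le_hasSum s (fun i _ => abs_nonneg _) (hasSum_abs y)

/-- The partial-sum functionals on ℓ¹. -/
def P (n : ℕ) : X →L[ℝ] ℝ :=
  LinearMap.mkContinuous
    { toFun := fun y => ∑ i ∈ Finset.range n, y i
      map_add' := fun a b => by
        simp [lp.coeFn_add, Finset.sum_add_distrib]
        exact Finset.sum_add_distrib
      map_smul' := fun c a => by
        simp [lp.coeFn_smul, Finset.mul_sum] }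
    1 (fun y => by
      simp only [LinearMap.coe_mk, AddHom.coe_mk, Real.norm_eq_abs, one_mul]
      exact (Finset.abs_sum_le_sum_abs _ _).trans (sum_abs_le y _))

lemma P_apply (n : ℕ) (y : X) : P n y = ∑ i ∈ Finset.range n, y i := rfl

lemma P_norm_le (n : ℕ) : ‖P n‖ ≤ 1 :=
  LinearMap.mkContinuous_norm_le _ zero_le_one _

lemma P_sub_apply {m n : ℕ} (h : m ≤ n) (y : X) :
    P n y - P m y = ∑ i ∈ Finset.Ico m n, y i := by
  rw [P_apply, P_apply, Finset.sum_Ico_eq_sub _ h]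

/-- Key step: the set of partial-sum functionals is an L-Dunford–Pettis set. -/
lemma isLDP : IsLDPSet (Set.range P) := by
  constructor
  · exact isBounded_iff_forall_norm_le.2 ⟨1, by rintro f ⟨n, rfl⟩; exact P_norm_le n⟩
  intro x hx hDP
  obtain ⟨C, hC⟩ := isBounded_iff_forall_norm_le.1 hDP.1
  -- main claim
  have key : ∀ ε : ℝ, 0 < ε → ∀ᶠ k in atTop, ∀ n, |P n (x k)| ≤ ε := by
    intro ε hε
    by_contra hcon
    rw [Filter.not_eventually] at hcon
    have hfreq : ∃ᶠ k in atTop, ∃ n, ε < |P n (x k)| := by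
      refine hcon.mono fun k hk => ?_
      push_neg at hk; exact hk
    -- step lemma
    have step : ∀ m : ℕ, ∃ k n, m < n ∧ ε / 2 ≤ |P n (x k) - P m (x k)| := by
      intro m
      have hev : ∀ᶠ k in atTop, ∀ q ∈ Finset.range (m + 1), |P q (x k)| < ε / 2 := by
        rw [Filter.eventually_all_finset]
        intro q _
        have := NormedAddCommGroup.tendsto_nhds_zero.mp (hx (P q)) (ε / 2) (by linarith)
        simpa [Real.norm_eq_abs] using this
      obtain ⟨k, ⟨n, hn⟩, hq⟩ := (hfreq.and_eventually hev).exists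
      have hmn : m < n := by
        by_contra hle
        push_neg at hle
        have := hq n (Finset.mem_range.2 (Nat.lt_succ_of_le hle))
        linarith
      refine ⟨k, n, hmn, ?_⟩
      have h1 := hq m (Finset.mem_range.2 (Nat.lt_succ_self m))
      have := abs_sub_abs_le_abs_sub (P n (x k)) (P m (x k))
      linarith
    choose kf nf hlt hbig using step
    -- recursive blocks
    let N : ℕ → ℕ := fun j => Nat.rec 0 (fun _ prev => nf prev) j
    have hN : ∀ j, N (j + 1) = nf (N j) := fun j => rfl
    have hmono : StrictMono N := strictMono_nat_of_lt_succ fun j => hlt (N j)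
    let K : ℕ → ℕ := fun j => kf (N j)
    let h : ℕ → (X →L[ℝ] ℝ) := fun j => P (N (j + 1)) - P (N j)
    have hbig' : ∀ j, ε / 2 ≤ |h j (x (K j))| := by
      intro j
      have := hbig (N j)
      simpa [h, hN, K, ContinuousLinearMap.sub_apply] using this
    have h_apply : ∀ (j : ℕ) (y : X), h j y = ∑ i ∈ Finset.Ico (N j) (N (j + 1)), y i := by
      intro j y
      simp only [h, ContinuousLinearMap.sub_apply]
      exact P_sub_apply (hmono (Nat.lt_succ_self j)).le y
    -- telescoping
    have tele : ∀ (y : X) (J : ℕ),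
        ∑ j ∈ Finset.range J, ∑ i ∈ Finset.Ico (N j) (N (j + 1)), |y i|
          = ∑ i ∈ Finset.Ico (N 0) (N J), |y i| := by
      intro y J
      induction J with
      | zero => simp
      | succ J ih =>
        rw [Finset.sum_range_succ, ih,
          Finset.sum_Ico_consecutive _ (hmono.monotone (Nat.zero_le J))
            (hmono (Nat.lt_succ_self J)).le]
    -- norm bound for signed sums of blocks
    have hnorm : ∀ (J : ℕ) (c : ℕ → ℝ), (∀ j, |c j| ≤ 1) →
        ‖∑ j ∈ Finset.range J, c j • h j‖ ≤ 1 := by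
      intro J c hc
      refine ContinuousLinearMap.opNorm_le_bound _ zero_le_one fun y => ?_
      rw [one_mul, Real.norm_eq_abs]
      have heq : (∑ j ∈ Finset.range J, c j • h j) y
          = ∑ j ∈ Finset.range J, c j * h j y := by
        simp [ContinuousLinearMap.sum_apply]
      rw [heq]
      calc |∑ j ∈ Finset.range J, c j * h j y|
          ≤ ∑ j ∈ Finset.range J, |c j * h j y| := Finset.abs_sum_le_sum_abs _ _
        _ ≤ ∑ j ∈ Finset.range J, ∑ i ∈ Finset.Ico (N j) (N (j + 1)), |y i| := by
            refine Finset.sum_le_sum fun j _ => ?_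
            rw [abs_mul, h_apply]
            calc |c j| * |∑ i ∈ Finset.Ico (N j) (N (j + 1)), y i|
                ≤ 1 * ∑ i ∈ Finset.Ico (N j) (N (j + 1)), |y i| := by
                  exact mul_le_mul (hc j) (Finset.abs_sum_le_sum_abs _ _)
                    (abs_nonneg _) zero_le_one
              _ = _ := one_mul _
        _ = ∑ i ∈ Finset.Ico (N 0) (N J), |y i| := tele y J
        _ ≤ ‖y‖ := sum_abs_le y _
    -- h is weakly null
    have hWN : WeaklyNull h := by
      intro φ
      have hpart : ∀ J : ℕ, ∑ j ∈ Finset.range J, |φ (h j)| ≤ ‖φ‖ := by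
        intro J
        set c : ℕ → ℝ := fun j => if 0 ≤ φ (h j) then 1 else -1 with hcdef
        have hc1 : ∀ j, |c j| ≤ 1 := by
          intro j; simp only [hcdef]
          split <;> simp
        have heq : ∑ j ∈ Finset.range J, |φ (h j)|
            = φ (∑ j ∈ Finset.range J, c j • h j) := by
          rw [map_sum]
          refine Finset.sum_congr rfl fun j _ => ?_
          rw [map_smul, smul_eq_mul]
          simp only [hcdef]
          split
          · rw [one_mul, abs_of_nonneg ‹_›]
          · rw [neg_one_mul, abs_of_neg (lt_of_not_ge ‹_›)]
        rw [heq]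
        calc φ (∑ j ∈ Finset.range J, c j • h j)
            ≤ |φ (∑ j ∈ Finset.range J, c j • h j)| := le_abs_self _
          _ ≤ ‖φ‖ * ‖∑ j ∈ Finset.range J, c j • h j‖ := by
              simpa [Real.norm_eq_abs] using
                (φ.le_opNorm (∑ j ∈ Finset.range J, c j • h j))
          _ ≤ ‖φ‖ * 1 := by
              exact mul_le_mul_of_nonneg_left (hnorm J c hc1) (norm_nonneg _)
          _ = ‖φ‖ := mul_one _
      have hsum : Summable fun j => |φ (h j)| :=
        summable_of_sum_range_le (fun _ => abs_nonneg _) hpart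
      exact (tendsto_zero_iff_abs_tendsto_zero _).2 hsum.tendsto_atTop_zero
    -- contradiction with the DP property of range x
    have hT := hDP.2 h hWN
    have hev2 : ∀ᶠ j in atTop,
        (⨆ y : Set.range x, |h j (y : X)|) < ε / 2 := by
      have := NormedAddCommGroup.tendsto_nhds_zero.mp hT (ε / 2) (by linarith)
      refine this.mono fun j hj => ?_
      exact lt_of_abs_lt (by simpa [Real.norm_eq_abs] using hj)
    obtain ⟨j, hj⟩ := hev2.exists
    have hbdd : BddAbove (Set.range fun y : Set.range x => |h j (y : X)|) := by
      refine ⟨‖h j‖ * C, ?_⟩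
      rintro r ⟨⟨y, k, rfl⟩, rfl⟩
      calc |h j (x k)| ≤ ‖h j‖ * ‖x k‖ := by
            simpa [Real.norm_eq_abs] using (h j).le_opNorm (x k)
        _ ≤ ‖h j‖ * C := by
            exact mul_le_mul_of_nonneg_left (hC _ (Set.mem_range_self k)) (norm_nonneg _)
    have hle : |h j (x (K j))| ≤ ⨆ y : Set.range x, |h j (y : X)| :=
      le_ciSup hbdd (⟨x (K j), Set.mem_range_self _⟩ : Set.range x)
    have := hbig' j
    linarith
  -- conclude the sup tends to zero
  rw [Metric.tendsto_atTop]
  intro ε hε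
  obtain ⟨M, hM⟩ := (Filter.eventually_atTop.1 (key (ε / 2) (by linarith)))
  refine ⟨M, fun k hk => ?_⟩
  have hub : (⨆ f : Set.range P, |(f : X →L[ℝ] ℝ) (x k)|) ≤ ε / 2 := by
    haveI hne : Nonempty (Set.range P) := ⟨⟨P 0, Set.mem_range_self 0⟩⟩
    refine ciSup_le fun f => ?_
    obtain ⟨n, hn⟩ := f.2
    rw [← hn]
    exact hM k hk n
  have hnn : 0 ≤ ⨆ f : Set.range P, |(f : X →L[ℝ] ℝ) (x k)| :=
    Real.iSup_nonneg fun f => abs_nonneg _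
  rw [Real.dist_eq, sub_zero, abs_of_nonneg hnn]
  linarith



/-- Standard basis vectors of ℓ¹. -/
def E0 (i : ℕ) : X := lp.single 1 i 1

lemma E0_norm (i : ℕ) : ‖E0 i‖ = 1 := by
  have := lp.norm_single (p := 1) (E := fun _ : ℕ => ℝ) (by norm_num)
    i (1 : ℝ)
  simpa [E0] using this

lemma E0_apply (i j : ℕ) : (E0 i : ∀ _ : ℕ, ℝ) j = if j = i then 1 else 0 := by
  rw [E0, lp.single_apply]
  split
  · subst ‹j = i›; simp
  · exact Pi.single_eq_of_ne ‹_› _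

lemma P_E0 (n i : ℕ) : P n (E0 i) = if i < n then 1 else 0 := by
  rw [P_apply]
  have : ∀ j ∈ Finset.range n, (E0 i : ∀ _ : ℕ, ℝ) j = if j = i then 1 else 0 :=
    fun j _ => E0_apply i j
  rw [Finset.sum_congr rfl this, Finset.sum_ite_eq' (Finset.range n) i fun _ => (1 : ℝ)]
  simp [Finset.mem_range]

/-- A fixed nonprincipal ultrafilter on ℕ. -/
def U : Ultrafilter ℕ := Filter.hyperfilter ℕ

lemma tendsto_limUnder {u : ℕ → ℝ} {C : ℝ} (hu : ∀ i, |u i| ≤ C) :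
    Filter.Tendsto u (U : Filter ℕ) (𝓝 (limUnder (U : Filter ℕ) u)) := by
  have hle : (Ultrafilter.map u U : Filter ℝ) ≤ 𝓟 (Set.Icc (-C) C) := by
    rw [Ultrafilter.coe_map, Filter.le_principal_iff, Filter.mem_map]
    exact Filter.univ_mem' fun i => by
      have := hu i; rw [abs_le] at this; exact ⟨this.1, this.2⟩
  obtain ⟨a, -, ha⟩ := isCompact_Icc.ultrafilter_le_nhds (Ultrafilter.map u U) hle
  exact le_nhds_lim ⟨a, ha⟩

/-- The "ultrafilter limit along the basis" functional on (ℓ¹)'. -/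
def phiStar : (X →L[ℝ] ℝ) →L[ℝ] ℝ :=
  LinearMap.mkContinuous
    { toFun := fun f => limUnder (U : Filter ℕ) (fun i => f (E0 i))
      map_add' := fun f g => by
        have hf : ∀ i, |f (E0 i)| ≤ ‖f‖ := fun i => by
          simpa [Real.norm_eq_abs, E0_norm] using f.le_opNorm (E0 i)
        have hg : ∀ i, |g (E0 i)| ≤ ‖g‖ := fun i => by
          simpa [Real.norm_eq_abs, E0_norm] using g.le_opNorm (E0 i)
        have hfg : ∀ i, |(f + g) (E0 i)| ≤ ‖f‖ + ‖g‖ := fun i => by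
          rw [ContinuousLinearMap.add_apply]
          exact (abs_add_le _ _).trans (add_le_add (hf i) (hg i))
        refine tendsto_nhds_unique (tendsto_limUnder hfg) ?_
        have : Filter.Tendsto (fun i => f (E0 i) + g (E0 i)) (U : Filter ℕ)
            (𝓝 (limUnder (U : Filter ℕ) (fun i => f (E0 i))
              + limUnder (U : Filter ℕ) (fun i => g (E0 i)))) :=
          (tendsto_limUnder hf).add (tendsto_limUnder hg)
        simpa [ContinuousLinearMap.add_apply] using this
      map_smul' := fun c f => by
        have hf : ∀ i, |f (E0 i)| ≤ ‖f‖ := fun i => by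
          simpa [Real.norm_eq_abs, E0_norm] using f.le_opNorm (E0 i)
        have hcf : ∀ i, |(c • f) (E0 i)| ≤ |c| * ‖f‖ := fun i => by
          rw [ContinuousLinearMap.smul_apply, smul_eq_mul, abs_mul]
          exact mul_le_mul_of_nonneg_left (hf i) (abs_nonneg c)
        refine tendsto_nhds_unique (tendsto_limUnder hcf) ?_
        have : Filter.Tendsto (fun i => c * f (E0 i)) (U : Filter ℕ)
            (𝓝 (c * limUnder (U : Filter ℕ) (fun i => f (E0 i)))) :=
          (tendsto_limUnder hf).const_mul c
        simpa [ContinuousLinearMap.smul_apply, smul_eq_mul] using this }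
    1 (fun f => by
      simp only [LinearMap.coe_mk, AddHom.coe_mk, Real.norm_eq_abs, one_mul]
      have hf : ∀ i, |f (E0 i)| ≤ ‖f‖ := fun i => by
        simpa [Real.norm_eq_abs, E0_norm] using f.le_opNorm (E0 i)
      have ht := (tendsto_limUnder hf).abs
      exact le_of_tendsto ht (Filter.Eventually.of_forall hf))

lemma phiStar_apply (f : X →L[ℝ] ℝ) :
    phiStar f = limUnder (U : Filter ℕ) (fun i => f (E0 i)) := rfl

lemma phiStar_P (n : ℕ) : phiStar (P n) = 0 := by
  rw [phiStar_apply]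
  have hev : ∀ᶠ i in (U : Filter ℕ), P n (E0 i) = 0 := by
    refine (Filter.hyperfilter_le_cofinite ?_)
    have : {i : ℕ | ¬ P n (E0 i) = 0} ⊆ Finset.range n := by
      intro i hi
      simp only [Set.mem_setOf_eq, P_E0] at hi
      by_contra hlt
      simp only [Finset.coe_range, Set.mem_Iio, not_lt] at hlt
      exact hi (by rw [if_neg (not_lt.mpr hlt)])
    exact Set.Finite.subset (Finset.range n).finite_toSet this
  have : Filter.Tendsto (fun i => P n (E0 i)) (U : Filter ℕ) (𝓝 0) :=
    Filter.Tendsto.congr' (hev.mono fun i hi => hi.symm) tendsto_const_nhds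
  exact this.limUnder_eq

lemma not_rwc : ¬ RelWeaklyCompact (Set.range P) := by
  intro hK
  set Y := X →L[ℝ] ℝ with hY
  set G : ℕ → WeakSpace ℝ Y := fun n => toWeakSpace ℝ Y (P n) with hG
  have hle : Filter.map G atTop ≤ 𝓟 (closure ((toWeakSpace ℝ Y) '' Set.range P)) := by
    rw [Filter.le_principal_iff, Filter.mem_map]
    exact Filter.univ_mem' fun n =>
      subset_closure (Set.mem_image_of_mem _ (Set.mem_range_self n))
  obtain ⟨p, -, hp⟩ := hK.exists_clusterPt hle
  set q : Y := (toWeakSpace ℝ Y).symm p with hq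
  have key : ∀ (ψ : Y →L[ℝ] ℝ) (L : ℝ),
      Filter.Tendsto (fun n => ψ (P n)) atTop (𝓝 L) → ψ q = L := by
    intro ψ L hT
    have hcont : Continuous fun z : WeakSpace ℝ Y => ψ ((toWeakSpace ℝ Y).symm z) :=
      WeakBilin.eval_continuous ((topDualPairing ℝ Y).flip) ψ
    have h1 : ClusterPt (ψ q) (Filter.map (fun n => ψ ((toWeakSpace ℝ Y).symm (G n))) atTop) := by
      have := hp.map hcont.continuousAt Filter.tendsto_map
      rwa [Filter.map_map] at this
    have h2 : (Filter.map (fun n => ψ ((toWeakSpace ℝ Y).symm (G n))) atTop) ≤ 𝓝 L := by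
      have : (fun n => ψ ((toWeakSpace ℝ Y).symm (G n))) = fun n => ψ (P n) := by
        funext n; rw [hG]; simp
      rw [this]; exact hT
    exact eq_of_nhds_neBot (h1.mono h2)
  -- q is the summation functional
  have hq_eval : ∀ y : X, q y = ∑' i, y i := by
    intro y
    have hsummable : Summable fun i => (y : ∀ _ : ℕ, ℝ) i := by
      have := (hasSum_abs y).summable
      exact this.of_abs
    have hT : Filter.Tendsto (fun n => (ContinuousLinearMap.apply ℝ ℝ y) (P n)) atTop
        (𝓝 (∑' i, y i)) := by
      have := hsummable.hasSum.tendsto_sum_nat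
      simpa [ContinuousLinearMap.apply, P_apply] using this
    exact key (ContinuousLinearMap.apply ℝ ℝ y) _ hT
  -- phiStar q = 0
  have h0 : phiStar q = 0 := by
    refine key phiStar 0 ?_
    have : (fun n => phiStar (P n)) = fun _ => (0 : ℝ) := funext phiStar_P
    rw [this]; exact tendsto_const_nhds
  -- but phiStar q = 1
  have h1 : phiStar q = 1 := by
    rw [phiStar_apply]
    have hq1 : ∀ i, q (E0 i) = 1 := by
      intro i
      rw [hq_eval]
      have : (fun j => (E0 i : ∀ _ : ℕ, ℝ) j) = fun j => if j = i then (1:ℝ) else 0 :=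
        funext (E0_apply i)
      rw [this]
      exact tsum_ite_eq i 1
    have : Filter.Tendsto (fun i => q (E0 i)) (U : Filter ℕ) (𝓝 1) := by
      have : (fun i => q (E0 i)) = fun _ => (1 : ℝ) := funext hq1
      rw [this]; exact tendsto_const_nhds
    exact this.limUnder_eq
  rw [h0] at h1
  exact one_ne_zero h1.symm

end Stmt15

theorem stmt15 : ¬ HasLDPProperty (lp (fun _ : ℕ => ℝ) 1) := by
  intro H
  exact Stmt15.not_rwc (H _ Stmt15.isLDP)
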